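/- Define F(λ, N) = [(1+λ(N-2))/(N-1)] ln(N(1+λ(N-2))/(N-1)) + [(N-2)(1-λ)/(N-1)] ln(N(1-λ)/(N-1)) for λ ∈ [0,1) and integer N ≥ 3 (extended by F(1,N) = ln N). Then for each N ≥ 3 the equation F(λ, N) = 2 ln N/(e+1) has a unique solution λ* ∈ (0,1). -/

import Mathlib

open Real Set

set_option maxHeartbeats 1000000 in
theorem unique_lambda_star (N : ℕ) (hN : 3 ≤ N)
    (F : ℝ → ℝ)
    (hF : F = fun lam =>
      ((1 + lam * ((N : ℝ) - 2)) / ((N : ℝ) - 1))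
        * Real.log ((N : ℝ) * (1 + lam * ((N : ℝ) - 2)) / ((N : ℝ) - 1))
      + (((N : ℝ) - 2) * (1 - lam) / ((N : ℝ) - 1))
        * Real.log ((N : ℝ) * (1 - lam) / ((N : ℝ) - 1))) :
    ∃! lam : ℝ, lam ∈ Set.Ioo (0 : ℝ) 1 ∧
      F lam = 2 * Real.log N / (Real.exp 1 + 1) := by
  have hn : (3:ℝ) ≤ (N:ℝ) := by exact_mod_cast hN
  set n : ℝ := (N:ℝ) with hn_def
  have hn0 : (0:ℝ) < n := by linarith
  have hn0' : n ≠ 0 := ne_of_gt hn0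
  have hn1 : (0:ℝ) < n - 1 := by linarith
  have hn1' : n - 1 ≠ 0 := ne_of_gt hn1
  have hn2 : (0:ℝ) ≤ n - 2 := by linarith
  set c : ℝ := 2 * Real.log n / (Real.exp 1 + 1) with hc_def
  have he1 : (1:ℝ) < Real.exp 1 := by
    have := Real.exp_one_gt_d9; linarith
  have he3 : Real.exp 1 < 3 := by
    have := Real.exp_one_lt_d9; linarith
  have hep : (0:ℝ) < Real.exp 1 + 1 := by linarith
  have hlogn : 1 < Real.log n := by
    rw [Real.lt_log_iff_exp_lt hn0]; linarith
  -- rewrite F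
  have hFeq : ∀ lam : ℝ, F lam =
      (1/n) * ((n*(1+lam*(n-2))/(n-1)) * Real.log (n*(1+lam*(n-2))/(n-1)))
      + ((n-2)/n) * ((n*(1-lam)/(n-1)) * Real.log (n*(1-lam)/(n-1))) := by
    intro lam
    rw [hF]
    set L1 := Real.log (n*(1+lam*(n-2))/(n-1)) with hL1
    set L2 := Real.log (n*(1-lam)/(n-1)) with hL2
    field_simp
    ring
  -- continuity
  have hv : Continuous fun lam : ℝ => n*(1+lam*(n-2))/(n-1) := by
    apply Continuous.div_const
    continuity
  have hu : Continuous fun lam : ℝ => n*(1-lam)/(n-1) := by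
    apply Continuous.div_const
    continuity
  have hcont : Continuous F := by
    rw [funext hFeq]
    exact (continuous_const.mul (Real.continuous_mul_log.comp hv)).add
      (continuous_const.mul (Real.continuous_mul_log.comp hu))
  -- endpoint values
  have hF0 : F 0 = Real.log (n/(n-1)) := by
    have h := hFeq 0
    have e1 : n*(1+(0:ℝ)*(n-2))/(n-1) = n/(n-1) := by ring
    have e2 : n*(1-(0:ℝ))/(n-1) = n/(n-1) := by ring
    rw [e1, e2] at h
    rw [h]
    set L := Real.log (n/(n-1))
    field_simp
    ring
  have hF1 : F 1 = Real.log n := by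
    have h := hFeq 1
    have e1 : n*(1+(1:ℝ)*(n-2))/(n-1) = n := by
      have : n*(1+(1:ℝ)*(n-2)) = n * (n-1) := by ring
      rw [this, mul_div_assoc, div_self hn1', mul_one]
    have e2 : n*(1-(1:ℝ))/(n-1) = 0 := by ring
    rw [e1, e2] at h
    rw [h, Real.log_zero]
    field_simp
    ring
  -- boundary inequalities
  have hF0lt : F 0 < c := by
    have hle : Real.log (n/(n-1)) ≤ 1/2 := by
      have h1 : Real.log (n/(n-1)) ≤ n/(n-1) - 1 :=
        Real.log_le_sub_one_of_pos (by positivity)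
      have h2 : n/(n-1) - 1 = 1/(n-1) := by field_simp; ring
      have h3 : 1/(n-1) ≤ 1/2 := by
        apply div_le_div_of_nonneg_left (by norm_num) (by norm_num) (by linarith)
      linarith
    rw [hF0, hc_def, lt_div_iff₀ hep]
    nlinarith [mul_le_mul_of_nonneg_right hle (le_of_lt hep)]
  have hF1gt : c < F 1 := by
    rw [hF1, hc_def, div_lt_iff₀ hep]
    nlinarith
  -- convexity on [0,1]
  have hconv : ConvexOn ℝ (Icc (0:ℝ) 1) F := by
    refine ⟨convex_Icc 0 1, ?_⟩
    intro x hx y hy a b ha hb hab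
    simp only [smul_eq_mul]
    obtain rfl : b = 1 - a := by linarith
    rw [hFeq (a*x+(1-a)*y), hFeq x, hFeq y]
    set vx := n*(1+x*(n-2))/(n-1) with hvx_def
    set vy := n*(1+y*(n-2))/(n-1) with hvy_def
    set ux := n*(1-x)/(n-1) with hux_def
    set uy := n*(1-y)/(n-1) with huy_def
    have hvx0 : (0:ℝ) ≤ vx := by
      rw [hvx_def]
      apply div_nonneg _ hn1.le
      nlinarith [mul_nonneg hx.1 hn2]
    have hvy0 : (0:ℝ) ≤ vy := by
      rw [hvy_def]
      apply div_nonneg _ hn1.le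
      nlinarith [mul_nonneg hy.1 hn2]
    have hux0 : (0:ℝ) ≤ ux := by
      rw [hux_def]
      apply div_nonneg _ hn1.le
      nlinarith [hx.2]
    have huy0 : (0:ℝ) ≤ uy := by
      rw [huy_def]
      apply div_nonneg _ hn1.le
      nlinarith [hy.2]
    have hv' : n*(1+(a*x+(1-a)*y)*(n-2))/(n-1) = a * vx + (1-a) * vy := by
      rw [hvx_def, hvy_def]
      field_simp
      ring
    have hu' : n*(1-(a*x+(1-a)*y))/(n-1) = a * ux + (1-a) * uy := by
      rw [hux_def, huy_def]
      field_simp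
      ring
    rw [hv', hu']
    have H1 := Real.convexOn_mul_log.2 (Set.mem_Ici.mpr hvx0) (Set.mem_Ici.mpr hvy0)
      ha hb (by ring : a + (1-a) = 1)
    have H2 := Real.convexOn_mul_log.2 (Set.mem_Ici.mpr hux0) (Set.mem_Ici.mpr huy0)
      ha hb (by ring : a + (1-a) = 1)
    simp only [smul_eq_mul] at H1 H2
    have c1 : (0:ℝ) ≤ 1/n := by positivity
    have c2 : (0:ℝ) ≤ (n-2)/n := by positivity
    nlinarith [mul_le_mul_of_nonneg_left H1 c1, mul_le_mul_of_nonneg_left H2 c2]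
  -- existence
  have hmemc : c ∈ Ioo (F 0) (F 1) := ⟨hF0lt, hF1gt⟩
  obtain ⟨lam, hlam, hlamc⟩ :=
    intermediate_value_Ioo (by norm_num : (0:ℝ) ≤ 1) hcont.continuousOn hmemc
  -- key lemma for uniqueness
  have key : ∀ a b : ℝ, a ∈ Ioo (0:ℝ) 1 → F a = c → b ∈ Ioo (0:ℝ) 1 → F b = c →
      a < b → False := by
    intro a b ha hFa hb hFb hab
    have hb0 : 0 < b := hb.1
    set t := a / b with ht_def
    have ht0 : 0 < t := div_pos ha.1 hb0
    have ht1 : t < 1 := (div_lt_one hb0).mpr hab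
    have htb : t * b = a := by rw [ht_def]; exact div_mul_cancel₀ a (ne_of_gt hb0)
    have h0mem : (0:ℝ) ∈ Icc (0:ℝ) 1 := by norm_num
    have hbmem : b ∈ Icc (0:ℝ) 1 := ⟨le_of_lt hb.1, le_of_lt hb.2⟩
    have H := hconv.2 h0mem hbmem (by linarith : (0:ℝ) ≤ 1 - t) (le_of_lt ht0)
      (by ring : (1 - t) + t = 1)
    simp only [smul_eq_mul, mul_zero, zero_add] at H
    rw [htb, hFa, hFb] at H
    -- H : c ≤ (1-t) * F 0 + t * c
    nlinarith [hF0lt]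
  refine ⟨lam, ⟨hlam, hlamc⟩, ?_⟩
  rintro y ⟨hy, hyc⟩
  rcases lt_trichotomy y lam with h | h | h
  · exact absurd (key y lam hy hyc hlam hlamc h) (by simp)
  · exact h
  · exact absurd (key lam y hlam hlamc hy hyc h) (by simp)
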